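/- (Polarization is a smoothing transformation) Let H ⊂ ℝⁿ be a hyperplane through the origin with reflection σ, H⁺ a chosen closed half-space, and let A ⊂ ℝⁿ. Then for every r > 0, A^σ + r·𝔹ⁿ ⊆ (A + r·𝔹ⁿ)^σ, where A^σ denotes the polarization of A with respect to H and 𝔹ⁿ is the closed unit ball. -/

import Mathlib

open MeasureTheory Metric Set Pointwise

noncomputable section

/-- Reflection across the hyperplane through the origin with unit normal `u`. -/
def reflHyp {n : ℕ} (u x : EuclideanSpace ℝ (Fin n)) : EuclideanSpace ℝ (Fin n) :=
  x - (2 * (inner ℝ x u : ℝ)) • u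

section helpers

variable {n : ℕ} {u : EuclideanSpace ℝ (Fin n)}

lemma reflHyp_norm_sub_sq (hu : ‖u‖ = 1) (z x : EuclideanSpace ℝ (Fin n)) :
    ‖reflHyp u z - x‖ ^ 2 = ‖z - x‖ ^ 2 + 4 * (inner ℝ z u : ℝ) * (inner ℝ x u : ℝ) := by
  have hzx : reflHyp u z - x = (z - x) - (2 * (inner ℝ z u : ℝ)) • u := by
    simp [reflHyp]; abel
  rw [hzx, @norm_sub_sq_real, inner_smul_right, inner_sub_left, norm_smul, hu, mul_one,
    Real.norm_eq_abs, sq_abs]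
  ring

lemma reflHyp_invol (hu : ‖u‖ = 1) (x : EuclideanSpace ℝ (Fin n)) :
    reflHyp u (reflHyp u x) = x := by
  have hnu : (inner ℝ u u : ℝ) = 1 := by
    rw [real_inner_self_eq_norm_sq, hu]; norm_num
  simp [reflHyp, inner_sub_left, inner_smul_left, hnu, hu, sub_smul, smul_smul]
  module

lemma reflHyp_add (x y : EuclideanSpace ℝ (Fin n)) :
    reflHyp u (x + y) = reflHyp u x + reflHyp u y := by
  simp [reflHyp, inner_add_left, mul_add, add_smul]; abel

lemma reflHyp_sub (x y : EuclideanSpace ℝ (Fin n)) :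
    reflHyp u (x - y) = reflHyp u x - reflHyp u y := by
  simp [reflHyp, inner_sub_left, mul_sub, sub_smul]; abel

lemma reflHyp_norm (hu : ‖u‖ = 1) (x : EuclideanSpace ℝ (Fin n)) :
    ‖reflHyp u x‖ = ‖x‖ := by
  have h := reflHyp_norm_sub_sq hu x 0
  simp at h
  nlinarith [norm_nonneg (reflHyp u x), norm_nonneg x]

lemma reflHyp_inner (hu : ‖u‖ = 1) (x : EuclideanSpace ℝ (Fin n)) :
    (inner ℝ (reflHyp u x) u : ℝ) = - inner ℝ x u := by
  have hnu : (inner ℝ u u : ℝ) = 1 := by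
    rw [real_inner_self_eq_norm_sq, hu]; norm_num
  simp [reflHyp, inner_sub_left, inner_smul_left, hnu, hu]; ring

end helpers


/-- The polarization of a set `A` with respect to the hyperplane with unit normal `u`
(the chosen half-space being `H⁺ = {x | ⟪x,u⟫ ≥ 0}`):
`A^σ = ((A ∪ σA) ∩ H⁺) ∪ ((A ∩ σA) ∩ H⁻)`. -/
def polarSet {n : ℕ} (u : EuclideanSpace ℝ (Fin n))
    (A : Set (EuclideanSpace ℝ (Fin n))) : Set (EuclideanSpace ℝ (Fin n)) :=
  ((A ∪ reflHyp u '' A) ∩ {x | 0 ≤ (inner ℝ x u : ℝ)}) ∪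
    ((A ∩ reflHyp u '' A) ∩ {x | (inner ℝ x u : ℝ) ≤ 0})

/-- **Polarization is a smoothing transformation**: for every `r > 0`,
`A^σ + r·𝔹ⁿ ⊆ (A + r·𝔹ⁿ)^σ`, where `𝔹ⁿ` is the closed unit ball. -/
theorem polarSet_smoothing {n : ℕ} (u : EuclideanSpace ℝ (Fin n)) (hu : ‖u‖ = 1)
    (A : Set (EuclideanSpace ℝ (Fin n))) (r : ℝ) (hr : 0 < r) :
    polarSet u A + r • closedBall (0 : EuclideanSpace ℝ (Fin n)) 1
      ⊆ polarSet u (A + r • closedBall (0 : EuclideanSpace ℝ (Fin n)) 1) := by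
  have hball : r • closedBall (0 : EuclideanSpace ℝ (Fin n)) 1 = closedBall 0 r := by
    rw [_root_.smul_closedBall _ _ zero_le_one]
    simp [Real.norm_eq_abs, abs_of_pos hr]
  rw [hball]
  set C : Set (EuclideanSpace ℝ (Fin n)) := A + closedBall (0 : EuclideanSpace ℝ (Fin n)) r
    with hC
  have hmemC : ∀ a ∈ A, ∀ z : EuclideanSpace ℝ (Fin n), ‖z - a‖ ≤ r → z ∈ C := by
    intro a ha z hz
    refine ⟨a, ha, z - a, ?_, by module⟩
    simpa [mem_closedBall, dist_eq_norm] using hz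
  have hmemσC : ∀ z : EuclideanSpace ℝ (Fin n), reflHyp u z ∈ C → z ∈ reflHyp u '' C := by
    intro z hz
    exact ⟨reflHyp u z, hz, reflHyp_invol hu z⟩
  rintro z ⟨x, hx, v, hv, rfl⟩
  have hvr : ‖v‖ ≤ r := by
    simpa [mem_closedBall, dist_eq_norm] using hv
  have hσvr : ‖reflHyp u v‖ ≤ r := by rw [reflHyp_norm hu]; exact hvr
  have hkey : ∀ w y : EuclideanSpace ℝ (Fin n), (inner ℝ w u : ℝ) * (inner ℝ y u : ℝ) ≤ 0 →
      ‖reflHyp u w - y‖ ≤ ‖w - y‖ := by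
    intro w y h
    have h2 := reflHyp_norm_sub_sq hu w y
    nlinarith [norm_nonneg (reflHyp u w - y), norm_nonneg (w - y)]
  rcases hx with ⟨hxmem, hxpos⟩ | ⟨⟨hxA, hxσA⟩, hxneg⟩
  · -- x ∈ (A ∪ σA) ∩ H⁺
    rcases le_total 0 (inner ℝ (x + v) u : ℝ) with hz | hz
    · refine Or.inl ⟨?_, hz⟩
      rcases hxmem with hxA | ⟨a, ha, rfl⟩
      · exact Or.inl (hmemC x hxA _ (by simpa using hvr))
      · refine Or.inr (hmemσC _ ?_)
        rw [reflHyp_add, reflHyp_invol hu]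
        exact hmemC a ha _ (by simpa using hσvr)
    · have hprod : (inner ℝ (x + v) u : ℝ) * (inner ℝ x u : ℝ) ≤ 0 :=
        mul_nonpos_of_nonpos_of_nonneg hz hxpos
      have hd : ‖reflHyp u (x + v) - x‖ ≤ r :=
        le_trans (hkey _ _ hprod) (by simpa using hvr)
      rcases hxmem with hxA | ⟨a, ha, rfl⟩
      · exact Or.inr ⟨⟨hmemC x hxA _ (by simpa using hvr), hmemσC _ (hmemC x hxA _ hd)⟩, hz⟩
      · have hσz : reflHyp u (reflHyp u a + v) = a + reflHyp u v := by
          rw [reflHyp_add, reflHyp_invol hu]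
        have hσneg : reflHyp u (-a) = - reflHyp u a := by
          simp [reflHyp, inner_neg_left]; module
        refine Or.inr ⟨⟨?_, hmemσC _ ?_⟩, hz⟩
        · refine hmemC a ha _ ?_
          calc ‖reflHyp u a + v - a‖
              = ‖reflHyp u (reflHyp u a + v - a)‖ := (reflHyp_norm hu _).symm
            _ = ‖reflHyp u (reflHyp u a + v) - reflHyp u a‖ := by rw [reflHyp_sub]
            _ ≤ r := hd
        · rw [hσz]; exact hmemC a ha _ (by simpa using hσvr)
  · obtain ⟨a, ha, rfl⟩ := hxσA
    have hzC : reflHyp u a + v ∈ C := hmemC (reflHyp u a) hxA _ (by simpa using hvr)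
    have hzσC : reflHyp u a + v ∈ reflHyp u '' C := by
      refine hmemσC _ ?_
      rw [reflHyp_add, reflHyp_invol hu]
      exact hmemC a ha _ (by simpa using hσvr)
    rcases le_total 0 (inner ℝ (reflHyp u a + v) u : ℝ) with hz | hz
    · exact Or.inl ⟨Or.inl hzC, hz⟩
    · exact Or.inr ⟨⟨hzC, hzσC⟩, hz⟩
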